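/- arXiv:1312.2780 — 2 statements merged into one kernel-verified Lean document; each statement's English description precedes it below -/
import Mathlib

section
/- There exists ε > 0 such that E[exp((α+ε) φ Y_0)] < ∞. -/
open MeasureTheory ProbabilityTheory Filter
open scoped ENNReal

/-- A measurable function `L : ℝ → ℝ` (used on `(0,∞)`) is slowly varying if it is
positive on `(0,∞)` and `L(t x)/L(x) → 1` as `x → ∞` for every `t > 0`. -/
def SlowlyVarying (L : ℝ → ℝ) : Prop :=
  Measurable L ∧ (∀ x > (0 : ℝ), 0 < L x) ∧
    ∀ t > (0 : ℝ), Tendsto (fun x => L (t * x) / L x) atTop (nhds 1)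

lemma tail_iff_exp_max (y x : ℝ) (hx : 1 ≤ x) :
    x < Real.exp (max y 0) ↔ x < Real.exp y := by
  have h1 : Real.exp (max y 0) = max (Real.exp y) 1 := by
    rcases le_total y 0 with h | h
    · rw [max_eq_right h, Real.exp_zero, max_eq_right (Real.exp_le_one_iff.2 h)]
    · rw [max_eq_left h, max_eq_left (Real.one_le_exp h)]
  rw [h1, lt_max_iff]
  constructor
  · rintro (h | h)
    · exact h
    · linarith
  · exact Or.inl


/-- Convexity bound: `exp (θ a) ≤ 1 + θ exp a` for `θ ∈ [0,1]`, `a ≥ 0`. -/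
lemma exp_theta_bound {θ a : ℝ} (h0 : 0 ≤ θ) (h1 : θ ≤ 1) (ha : 0 ≤ a) :
    Real.exp (θ * a) ≤ 1 + θ * Real.exp a := by
  have h := convexOn_exp.2 (Set.mem_univ (0:ℝ)) (Set.mem_univ a)
    (by linarith : (0:ℝ) ≤ 1 - θ) h0 (by ring)
  simp only [smul_eq_mul, mul_zero, zero_add, Real.exp_zero, mul_one] at h
  nlinarith [Real.exp_pos a]

/-- Moment bound from a geometric dyadic tail estimate. -/
lemma lintegral_rpow_ne_top {Ω : Type*} [MeasureSpace Ω] [IsProbabilityMeasure (ℙ : Measure Ω)]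
    (Z : Ω → ℝ) (hZm : Measurable Z) (hZ1 : ∀ ω, 1 ≤ Z ω)
    (s s' x0 C : ℝ) (hs : 0 < s) (hss' : s < s') (hx0 : 1 ≤ x0) (hC : 0 ≤ C)
    (htail : ∀ n : ℕ, ℙ {ω | x0 * 2 ^ n < Z ω} ≤ ENNReal.ofReal (C * ((2:ℝ) ^ (-s')) ^ n)) :
    ∫⁻ ω, ENNReal.ofReal (Z ω ^ s) ∂ℙ ≠ ⊤ := by
  have h2 : (0:ℝ) < 2 := by norm_num
  set r : ℝ := (2:ℝ) ^ (-s') with hr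
  have hr0 : 0 < r := Real.rpow_pos_of_pos h2 _
  set u : ℝ := (2:ℝ) ^ s * r with hu
  have hu0 : 0 ≤ u := by positivity
  have hu1 : u < 1 := by
    have : u = (2:ℝ) ^ (s + (-s')) := by rw [Real.rpow_add h2]
    rw [this]
    exact Real.rpow_lt_one_of_one_lt_of_neg (by norm_num) (by linarith)
  have hx00 : (0:ℝ) < x0 := by linarith
  have hZ0 : ∀ ω, (0:ℝ) < Z ω := fun ω => lt_of_lt_of_le one_pos (hZ1 ω)
  have hsets : ∀ n : ℕ, MeasurableSet {ω | x0 * 2 ^ n < Z ω} :=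
    fun n => measurableSet_lt measurable_const hZm
  -- pointwise bound
  have hpt : ∀ ω, ENNReal.ofReal (Z ω ^ s) ≤ ENNReal.ofReal (x0 ^ s) +
      ∑' n : ℕ, Set.indicator {ω | x0 * 2 ^ n < Z ω}
        (fun _ => ENNReal.ofReal ((x0 * 2 ^ (n+1)) ^ s)) ω := by
    intro ω
    by_cases hzx : Z ω ≤ x0
    · refine le_trans ?_ le_self_add
      exact ENNReal.ofReal_le_ofReal (Real.rpow_le_rpow (hZ0 ω).le hzx hs.le)
    · push_neg at hzx
      have hQ : ∃ k : ℕ, Z ω ≤ x0 * 2 ^ k := by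
        obtain ⟨k, hk⟩ := pow_unbounded_of_one_lt (Z ω) (by norm_num : (1:ℝ) < 2)
        exact ⟨k, le_trans hk.le (le_mul_of_one_le_left (by positivity) hx0)⟩
      set m := Nat.find hQ with hm
      have hm0 : m ≠ 0 := by
        intro h
        have := Nat.find_spec hQ
        rw [← hm, h] at this
        simp at this
        linarith
      obtain ⟨n, hn⟩ : ∃ n, m = n + 1 := ⟨m - 1, (Nat.succ_pred_eq_of_pos (Nat.pos_of_ne_zero hm0)).symm⟩
      have h1n : x0 * 2 ^ n < Z ω := by
        have := Nat.find_min hQ (by omega : n < m)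
        push_neg at this
        exact this
      have h2n : Z ω ≤ x0 * 2 ^ (n + 1) := by
        have := Nat.find_spec hQ
        rwa [← hm, hn] at this
      refine le_trans ?_ le_add_self
      refine le_trans (ENNReal.ofReal_le_ofReal (Real.rpow_le_rpow (hZ0 ω).le h2n hs.le)) ?_
      refine le_trans ?_ (ENNReal.le_tsum n)
      exact le_of_eq (Set.indicator_of_mem (show ω ∈ {ω | x0 * 2 ^ n < Z ω} from h1n) (fun _ => ENNReal.ofReal ((x0 * 2 ^ (n + 1)) ^ s))).symm
  have key : ∫⁻ ω, ENNReal.ofReal (Z ω ^ s) ∂ℙ ≤ ENNReal.ofReal (x0 ^ s) +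
      ∑' n : ℕ, ENNReal.ofReal ((x0 * 2 ^ (n+1)) ^ s) * ENNReal.ofReal (C * r ^ n) := by
    calc ∫⁻ ω, ENNReal.ofReal (Z ω ^ s) ∂ℙ
        ≤ ∫⁻ ω, (ENNReal.ofReal (x0 ^ s) +
          ∑' n : ℕ, Set.indicator {ω | x0 * 2 ^ n < Z ω}
            (fun _ => ENNReal.ofReal ((x0 * 2 ^ (n+1)) ^ s)) ω) ∂ℙ := lintegral_mono hpt
      _ = ENNReal.ofReal (x0 ^ s) + ∫⁻ ω, ∑' n : ℕ, Set.indicator {ω | x0 * 2 ^ n < Z ω}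
            (fun _ => ENNReal.ofReal ((x0 * 2 ^ (n+1)) ^ s)) ω ∂ℙ := by
          rw [lintegral_add_left measurable_const, lintegral_const, measure_univ, mul_one]
      _ = ENNReal.ofReal (x0 ^ s) + ∑' n : ℕ, ∫⁻ ω, Set.indicator {ω | x0 * 2 ^ n < Z ω}
            (fun _ => ENNReal.ofReal ((x0 * 2 ^ (n+1)) ^ s)) ω ∂ℙ := by
          rw [lintegral_tsum (fun n => ((measurable_const).indicator (hsets n)).aemeasurable)]
      _ ≤ ENNReal.ofReal (x0 ^ s) +
          ∑' n : ℕ, ENNReal.ofReal ((x0 * 2 ^ (n+1)) ^ s) * ENNReal.ofReal (C * r ^ n) := by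
          refine add_le_add_right (ENNReal.tsum_le_tsum (fun n => ?_)) _
          rw [lintegral_indicator_const (hsets n)]
          exact mul_le_mul_right (htail n) _
  have hterm : ∀ n : ℕ, ENNReal.ofReal ((x0 * 2 ^ (n+1)) ^ s) * ENNReal.ofReal (C * r ^ n)
      = ENNReal.ofReal ((x0 * 2) ^ s * C) * (ENNReal.ofReal u) ^ n := by
    intro n
    have hpow : ∀ k : ℕ, ((2:ℝ) ^ k) ^ s = ((2:ℝ) ^ s) ^ k := fun k => by
      rw [← Real.rpow_natCast (2:ℝ) k, ← Real.rpow_mul (by norm_num), mul_comm,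
        Real.rpow_mul (by norm_num), Real.rpow_natCast]
    have hre : (x0 * 2 ^ (n+1)) ^ s * (C * r ^ n) = ((x0 * 2) ^ s * C) * u ^ n := by
      have h1 : (x0 * 2 ^ (n+1)) ^ s = x0 ^ s * ((2:ℝ) ^ s) ^ (n+1) := by
        rw [Real.mul_rpow hx00.le (by positivity), hpow]
      rw [h1, pow_succ, hu, Real.mul_rpow hx00.le (by norm_num), mul_pow]
      ring
    rw [← ENNReal.ofReal_mul (Real.rpow_nonneg (mul_nonneg hx00.le (by positivity)) s), hre,
      ENNReal.ofReal_mul (mul_nonneg (Real.rpow_nonneg (mul_nonneg hx00.le (by norm_num)) s) hC),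
      ENNReal.ofReal_pow hu0]
  rw [show (∑' n : ℕ, ENNReal.ofReal ((x0 * 2 ^ (n+1)) ^ s) * ENNReal.ofReal (C * r ^ n))
      = ∑' n : ℕ, ENNReal.ofReal ((x0 * 2) ^ s * C) * (ENNReal.ofReal u) ^ n from
      tsum_congr hterm] at key
  rw [ENNReal.tsum_mul_left, ENNReal.tsum_geometric] at key
  refine ne_top_of_le_ne_top ?_ key
  refine ENNReal.add_ne_top.2 ⟨ENNReal.ofReal_ne_top, ENNReal.mul_ne_top ENNReal.ofReal_ne_top ?_⟩
  rw [ENNReal.inv_ne_top]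
  intro h
  have := ENNReal.ofReal_lt_one.2 hu1
  rw [tsub_eq_zero_iff_le] at h
  exact absurd h (not_le.2 this)


lemma dyadic_tail {Ω : Type*} [MeasureSpace Ω] [IsProbabilityMeasure (ℙ : Measure Ω)]
    (ξ : Ω → ℝ) (α : ℝ) (hα : 0 < α) (L : ℝ → ℝ) (hL : SlowlyVarying L)
    (h31 : ∀ x > (0 : ℝ), (ℙ {ω | x < Real.exp (ξ ω)}).toReal = x ^ (-α) * L x)
    (s' : ℝ) (hs' : s' < α) :
    ∃ x0 : ℝ, 1 ≤ x0 ∧ ∀ n : ℕ,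
      ℙ {ω | x0 * 2 ^ n < Real.exp (ξ ω)} ≤ ENNReal.ofReal (((2:ℝ) ^ (-s')) ^ n) := by
  have h2 : (0:ℝ) < 2 := by norm_num
  set r : ℝ := (2:ℝ) ^ (-s') with hrdef
  have hr0 : 0 < r := Real.rpow_pos_of_pos h2 _
  have hmeq : ∀ x > (0:ℝ), ℙ {ω | x < Real.exp (ξ ω)} = ENNReal.ofReal (x ^ (-α) * L x) :=
    fun x hx => by rw [← h31 x hx, ENNReal.ofReal_toReal (measure_ne_top _ _)]
  set A : ℝ := (2:ℝ) ^ (α - s') with hAdef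
  have hA : 1 < A := by
    rw [hAdef]
    exact (Real.one_lt_rpow_iff_of_pos h2).2 (Or.inl ⟨by norm_num, by linarith⟩)
  have hev : ∀ᶠ x in atTop, L (2 * x) / L x < A :=
    (hL.2.2 2 h2).eventually_lt_const hA
  obtain ⟨x0', hx0'⟩ := eventually_atTop.1 hev
  set x0 : ℝ := max x0' 1 with hx0def
  have hx01 : 1 ≤ x0 := le_max_right _ _
  have step : ∀ x, x0 ≤ x → ℙ {ω | 2 * x < Real.exp (ξ ω)} ≤
      ENNReal.ofReal r * ℙ {ω | x < Real.exp (ξ ω)} := by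
    intro x hx
    have hx1 : (1:ℝ) ≤ x := le_trans hx01 hx
    have hxpos : (0:ℝ) < x := by linarith
    have h2x : (0:ℝ) < 2 * x := by linarith
    rw [hmeq (2*x) h2x, hmeq x hxpos,
      ← ENNReal.ofReal_mul hr0.le]
    apply ENNReal.ofReal_le_ofReal
    have hLx : 0 < L x := hL.2.1 x hxpos
    have hL2x : L (2 * x) < A * L x := by
      have := hx0' x (le_trans (le_max_left _ _) hx)
      rwa [div_lt_iff₀ hLx] at this
    have hL2xpos : 0 < L (2 * x) := hL.2.1 _ h2x
    have e1 : ((2*x):ℝ) ^ (-α) = (2:ℝ) ^ (-α) * x ^ (-α) := Real.mul_rpow (by norm_num) hxpos.le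
    have e2 : (2:ℝ) ^ (-α) * A = r := by
      rw [hAdef, hrdef, ← Real.rpow_add h2]
      ring_nf
    have hxa : (0:ℝ) < x ^ (-α) := Real.rpow_pos_of_pos hxpos _
    have h2a : (0:ℝ) < (2:ℝ) ^ (-α) := Real.rpow_pos_of_pos h2 _
    calc ((2*x):ℝ) ^ (-α) * L (2*x) = (2:ℝ) ^ (-α) * x ^ (-α) * L (2*x) := by rw [e1]
      _ ≤ (2:ℝ) ^ (-α) * x ^ (-α) * (A * L x) := by
          exact mul_le_mul_of_nonneg_left hL2x.le (by positivity)
      _ = r * (x ^ (-α) * L x) := by rw [← e2]; ring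
  refine ⟨x0, hx01, fun n => ?_⟩
  induction n with
  | zero => simpa using prob_le_one
  | succ n ih =>
    have hset : x0 * 2 ^ (n+1) = 2 * (x0 * 2 ^ n) := by ring
    rw [hset]
    calc ℙ {ω | 2 * (x0 * 2 ^ n) < Real.exp (ξ ω)}
        ≤ ENNReal.ofReal r * ℙ {ω | x0 * 2 ^ n < Real.exp (ξ ω)} := by
          apply step
          have : (1:ℝ) ≤ 2 ^ n := one_le_pow₀ (by norm_num : (1:ℝ) ≤ 2)
          nlinarith
      _ ≤ ENNReal.ofReal r * ENNReal.ofReal (r ^ n) := mul_le_mul_right ih _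
      _ = ENNReal.ofReal (r ^ (n+1)) := by
          rw [← ENNReal.ofReal_mul hr0.le, pow_succ]
          ring_nf

lemma integrable_exp_mul_tsum {Ω : Type*} [MeasureSpace Ω] [IsProbabilityMeasure (ℙ : Measure Ω)]
    (η : ℤ → Ω → ℝ) (hηmeas : ∀ t, Measurable (η t))
    (hηindep : iIndepFun η ℙ)
    (hηident : ∀ t, IdentDistrib (η t) (η 0) ℙ ℙ)
    (φ c : ℝ) (hβ1 : |φ| < 1)
    (W : Ω → ℝ) (hWmeas : Measurable W) (hW0 : ∀ ω, 0 ≤ W ω)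
    (MW : ℝ) (hMW0 : 0 ≤ MW)
    (hWint : ∫⁻ ω, ENNReal.ofReal (W ω) ∂ℙ ≤ ENNReal.ofReal MW)
    (hWbd : ∀ (t : ℤ) (ω : Ω),
      Real.exp (c * φ ^ t.natAbs * η 0 ω) ≤ 1 + |φ| ^ t.natAbs * W ω) :
    Integrable (fun ω => Real.exp (c * ∑' j : ℕ, φ ^ j * η ((0:ℤ) - (j:ℤ)) ω)) ℙ := by
  set β : ℝ := |φ| with hβdef
  have hβ0 : (0:ℝ) ≤ β := abs_nonneg φ
  have hβlt : β < 1 := hβ1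
  set d : ℤ → ℝ := fun t => c * φ ^ t.natAbs with hd
  set G : ℤ → Ω → ℝ≥0∞ := fun t ω => ENNReal.ofReal (Real.exp (d t * η t ω)) with hG
  set f : ℕ → Ω → ℝ := fun j ω => φ ^ j * η ((0:ℤ) - (j:ℤ)) ω with hf
  have hfmeas : ∀ j, Measurable (f j) := fun j => (hηmeas _).const_mul _
  have hGmeas : ∀ t, Measurable (G t) := fun t =>
    (((hηmeas t).const_mul (d t)).exp).ennreal_ofReal
  have hGindep : iIndepFun G ℙ := by
    have h := hηindep.comp (fun t (y : ℝ) => ENNReal.ofReal (Real.exp (d t * y)))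
      (fun t => ((measurable_id.const_mul (d t)).exp).ennreal_ofReal)
    exact h
  -- identically distributed factors
  have hmt : ∀ t : ℤ, ∫⁻ ω, G t ω ∂ℙ = ∫⁻ ω, ENNReal.ofReal (Real.exp (d t * η 0 ω)) ∂ℙ :=
    fun t => ((hηident t).comp
      (((measurable_id.const_mul (d t)).exp).ennreal_ofReal)).lintegral_eq
  -- per-factor bound
  have hfac : ∀ t : ℤ, ∫⁻ ω, G t ω ∂ℙ ≤ ENNReal.ofReal (Real.exp (MW * β ^ t.natAbs)) := by
    intro t
    rw [hmt t]
    have h1 : ∫⁻ ω, ENNReal.ofReal (Real.exp (d t * η 0 ω)) ∂ℙ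
        ≤ ∫⁻ ω, (1 + ENNReal.ofReal (β ^ t.natAbs) * ENNReal.ofReal (W ω)) ∂ℙ := by
      refine lintegral_mono fun ω => ?_
      calc ENNReal.ofReal (Real.exp (d t * η 0 ω))
          ≤ ENNReal.ofReal (1 + β ^ t.natAbs * W ω) :=
            ENNReal.ofReal_le_ofReal (by simpa [hd, mul_assoc] using hWbd t ω)
        _ = 1 + ENNReal.ofReal (β ^ t.natAbs) * ENNReal.ofReal (W ω) := by
            rw [ENNReal.ofReal_add (by norm_num) (mul_nonneg (pow_nonneg hβ0 _) (hW0 ω)),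
              ENNReal.ofReal_one, ENNReal.ofReal_mul (pow_nonneg hβ0 _)]
    have h2 : ∫⁻ ω, (1 + ENNReal.ofReal (β ^ t.natAbs) * ENNReal.ofReal (W ω)) ∂ℙ
        = 1 + ENNReal.ofReal (β ^ t.natAbs) * ∫⁻ ω, ENNReal.ofReal (W ω) ∂ℙ := by
      rw [lintegral_add_left measurable_const, lintegral_const, measure_univ, mul_one,
        lintegral_const_mul _ hWmeas.ennreal_ofReal]
    refine le_trans h1 (le_trans (le_of_eq h2) ?_)
    calc 1 + ENNReal.ofReal (β ^ t.natAbs) * ∫⁻ ω, ENNReal.ofReal (W ω) ∂ℙ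
        ≤ 1 + ENNReal.ofReal (β ^ t.natAbs) * ENNReal.ofReal MW :=
          add_le_add_right (mul_le_mul_right hWint _) _
      _ = ENNReal.ofReal (1 + β ^ t.natAbs * MW) := by
          rw [← ENNReal.ofReal_mul (pow_nonneg hβ0 _),
            ENNReal.ofReal_add (by norm_num) (mul_nonneg (pow_nonneg hβ0 _) hMW0),
            ENNReal.ofReal_one]
      _ ≤ ENNReal.ofReal (Real.exp (MW * β ^ t.natAbs)) := by
          apply ENNReal.ofReal_le_ofReal
          calc (1:ℝ) + β ^ t.natAbs * MW = β ^ t.natAbs * MW + 1 := by ring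
            _ ≤ Real.exp (β ^ t.natAbs * MW) := Real.add_one_le_exp _
            _ = Real.exp (MW * β ^ t.natAbs) := by rw [mul_comm]
  have hnatAbs : ∀ j : ℕ, ((0:ℤ) - (j:ℤ)).natAbs = j := fun j => by simp
  have hGf : ∀ (j : ℕ) (ω : Ω), G ((0:ℤ) - (j:ℤ)) ω = ENNReal.ofReal (Real.exp (c * f j ω)) := by
    intro j ω
    simp only [hG, hd, hf, hnatAbs j]
    rw [mul_assoc]
  have hprodpt : ∀ (n : ℕ) (ω : Ω), ∏ j ∈ Finset.range n, G ((0:ℤ) - (j:ℤ)) ω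
      = ENNReal.ofReal (Real.exp (c * ∑ j ∈ Finset.range n, f j ω)) := by
    intro n ω
    calc ∏ j ∈ Finset.range n, G ((0:ℤ) - (j:ℤ)) ω
        = ∏ j ∈ Finset.range n, ENNReal.ofReal (Real.exp (c * f j ω)) :=
          Finset.prod_congr rfl fun j _ => hGf j ω
      _ = ENNReal.ofReal (∏ j ∈ Finset.range n, Real.exp (c * f j ω)) :=
          (ENNReal.ofReal_prod_of_nonneg (fun i _ => (Real.exp_pos _).le)).symm
      _ = ENNReal.ofReal (Real.exp (∑ j ∈ Finset.range n, c * f j ω)) := by rw [Real.exp_sum]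
      _ = ENNReal.ofReal (Real.exp (c * ∑ j ∈ Finset.range n, f j ω)) := by rw [Finset.mul_sum]
  -- independence: expectation of product is product of expectations
  have hprod : ∀ n : ℕ, ∫⁻ ω, ∏ j ∈ Finset.range n, G ((0:ℤ) - (j:ℤ)) ω ∂ℙ
      = ∏ j ∈ Finset.range n, ∫⁻ ω, G ((0:ℤ) - (j:ℤ)) ω ∂ℙ := by
    intro n
    induction n with
    | zero => simp
    | succ n ih =>
      set timg : Finset ℤ := (Finset.range n).image (fun j : ℕ => (0:ℤ) - (j:ℤ)) with htimg
      have hnot : (0:ℤ) - (n:ℤ) ∉ timg := by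
        simp only [htimg, Finset.mem_image, Finset.mem_range]
        rintro ⟨j, hj, hEq⟩
        omega
      have hIF : IndepFun (∏ t ∈ timg, G t) (G ((0:ℤ) - (n:ℤ))) ℙ :=
        hGindep.indepFun_finset_prod_of_notMem hGmeas hnot
      have himg : ∀ ω, (∏ t ∈ timg, G t) ω = ∏ j ∈ Finset.range n, G ((0:ℤ) - (j:ℤ)) ω := by
        intro ω
        rw [Finset.prod_apply, htimg, Finset.prod_image (fun a _ b _ h => by omega)]
      have hFmeas : Measurable (∏ t ∈ timg, G t) := by
        rw [show (∏ t ∈ timg, G t) = fun ω => ∏ t ∈ timg, G t ω from funext fun ω => Finset.prod_apply ω _ _]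
        exact Finset.measurable_prod _ (fun i _ => hGmeas i)
      have hmul := lintegral_mul_eq_lintegral_mul_lintegral_of_indepFun hFmeas
        (hGmeas ((0:ℤ) - (n:ℤ))) hIF
      calc ∫⁻ ω, ∏ j ∈ Finset.range (n+1), G ((0:ℤ) - (j:ℤ)) ω ∂ℙ
          = ∫⁻ ω, (∏ t ∈ timg, G t) ω * G ((0:ℤ) - (n:ℤ)) ω ∂ℙ :=
            lintegral_congr fun ω => by rw [Finset.prod_range_succ, himg ω]
        _ = (∫⁻ ω, (∏ t ∈ timg, G t) ω ∂ℙ) * ∫⁻ ω, G ((0:ℤ) - (n:ℤ)) ω ∂ℙ := by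
            simpa [Pi.mul_apply] using hmul
        _ = (∏ j ∈ Finset.range n, ∫⁻ ω, G ((0:ℤ) - (j:ℤ)) ω ∂ℙ) *
              ∫⁻ ω, G ((0:ℤ) - (n:ℤ)) ω ∂ℙ := by
            rw [lintegral_congr himg, ih]
        _ = ∏ j ∈ Finset.range (n+1), ∫⁻ ω, G ((0:ℤ) - (j:ℤ)) ω ∂ℙ :=
            (Finset.prod_range_succ _ n).symm
  -- geometric sum bound
  have hgeom : ∀ n : ℕ, ∑ j ∈ Finset.range n, β ^ j ≤ (1 - β)⁻¹ := by
    intro n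
    have h1β : (0:ℝ) < 1 - β := by linarith
    have hgs := geom_sum_eq (ne_of_lt hβlt) n
    rw [hgs, show (β ^ n - 1)/(β - 1) = (1 - β ^ n)/(1 - β) from by
      rw [← neg_div_neg_eq]; ring_nf]
    rw [inv_eq_one_div]
    gcongr <;> nlinarith [pow_nonneg hβ0 n]
  set B : ℝ≥0∞ := ENNReal.ofReal (Real.exp (MW * (1 - β)⁻¹)) with hB
  have hEn : ∀ n : ℕ, ∫⁻ ω, ∏ j ∈ Finset.range n, G ((0:ℤ) - (j:ℤ)) ω ∂ℙ ≤ B := by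
    intro n
    rw [hprod n]
    calc ∏ j ∈ Finset.range n, ∫⁻ ω, G ((0:ℤ) - (j:ℤ)) ω ∂ℙ
        ≤ ∏ j ∈ Finset.range n, ENNReal.ofReal (Real.exp (MW * β ^ j)) := by
          refine Finset.prod_le_prod' fun j _ => ?_
          have h := hfac ((0:ℤ) - (j:ℤ))
          rwa [hnatAbs j] at h
      _ = ENNReal.ofReal (∏ j ∈ Finset.range n, Real.exp (MW * β ^ j)) :=
          (ENNReal.ofReal_prod_of_nonneg fun i _ => (Real.exp_pos _).le).symm
      _ = ENNReal.ofReal (Real.exp (∑ j ∈ Finset.range n, MW * β ^ j)) := by rw [Real.exp_sum]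
      _ ≤ B := by
          apply ENNReal.ofReal_le_ofReal
          apply Real.exp_le_exp.2
          rw [← Finset.mul_sum]
          exact mul_le_mul_of_nonneg_left (hgeom n) hMW0
  -- the summability set
  set S : Set Ω := {ω | (∑' j : ℕ, (‖f j ω‖₊ : ℝ≥0∞)) ≠ ⊤} with hS
  have htsum_meas : Measurable fun ω => ∑' j : ℕ, (‖f j ω‖₊ : ℝ≥0∞) :=
    Measurable.ennreal_tsum fun j => (hfmeas j).nnnorm.coe_nnreal_ennreal
  have hSmeas : MeasurableSet S := by
    have hSe : S = (fun ω => ∑' j : ℕ, (‖f j ω‖₊ : ℝ≥0∞)) ⁻¹' {⊤}ᶜ := by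
      ext ω; simp [hS]
    rw [hSe]
    exact htsum_meas (measurableSet_singleton ⊤).compl
  have hSsum : ∀ ω ∈ S, Summable fun j => f j ω := fun ω hω =>
    Summable.of_nnnorm (ENNReal.tsum_coe_ne_top_iff_summable.1 hω)
  have hSnot : ∀ ω, ω ∉ S → ¬ Summable fun j => f j ω := by
    intro ω hω hsum
    apply hω
    have h1 : Summable fun j => |f j ω| := hsum.abs
    have h2 : Summable fun j => ‖f j ω‖₊ := by
      rw [← NNReal.summable_coe]
      simpa [coe_nnnorm, Real.norm_eq_abs] using h1
    exact ENNReal.tsum_coe_ne_top_iff_summable.2 h2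
  set T : Ω → ℝ := fun ω => ∑' j : ℕ, f j ω with hT
  have htend : ∀ ω ∈ S, Tendsto (fun n => ∑ j ∈ Finset.range n, f j ω) atTop (nhds (T ω)) :=
    fun ω hω => (hSsum ω hω).hasSum.tendsto_sum_nat
  have hTnot : ∀ ω, ω ∉ S → T ω = 0 := fun ω hω => tsum_eq_zero_of_not_summable (hSnot ω hω)
  have hTmeas : Measurable T := by
    apply measurable_of_tendsto_metrizable'
      (f := fun n => S.indicator (fun ω => ∑ j ∈ Finset.range n, f j ω)) atTop
    · exact fun n => (Finset.measurable_sum _ (fun j _ => hfmeas j)).indicator hSmeas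
    · rw [tendsto_pi_nhds]
      intro ω
      by_cases hω : ω ∈ S
      · have := htend ω hω
        simpa [Set.indicator_of_mem hω] using this
      · simp only [Set.indicator_of_notMem hω, hTnot ω hω]
        exact tendsto_const_nhds
  -- the limit function
  set g : Ω → ℝ≥0∞ := fun ω => ENNReal.ofReal (Real.exp (c * T ω)) with hg
  have hgmeas : Measurable g := ((hTmeas.const_mul c).exp).ennreal_ofReal
  set F : ℕ → Ω → ℝ≥0∞ := fun n => S.indicator
    (fun ω => ENNReal.ofReal (Real.exp (c * ∑ j ∈ Finset.range n, f j ω))) with hF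
  have hFmeas : ∀ n, Measurable (F n) := fun n =>
    ((((Finset.measurable_sum _ (fun j _ => hfmeas j)).const_mul c).exp).ennreal_ofReal).indicator hSmeas
  have hFle : ∀ n, ∫⁻ ω, F n ω ∂ℙ ≤ B := by
    intro n
    refine le_trans (lintegral_mono fun ω => Set.indicator_le_self _ _ ω) ?_
    refine le_trans (le_of_eq (lintegral_congr fun ω => (hprodpt n ω).symm)) (hEn n)
  have hliminf : ∀ ω, S.indicator g ω ≤ Filter.liminf (fun n => F n ω) atTop := by
    intro ω
    by_cases hω : ω ∈ S
    · rw [Set.indicator_of_mem hω]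
      have htd : Tendsto (fun n => F n ω) atTop (nhds (g ω)) := by
        have h1 : Tendsto (fun n => c * ∑ j ∈ Finset.range n, f j ω) atTop (nhds (c * T ω)) :=
          (htend ω hω).const_mul c
        have h2 : Tendsto (fun n => ENNReal.ofReal (Real.exp (c * ∑ j ∈ Finset.range n, f j ω)))
            atTop (nhds (ENNReal.ofReal (Real.exp (c * T ω)))) :=
          (ENNReal.continuous_ofReal.tendsto _).comp ((Real.continuous_exp.tendsto _).comp h1)
        refine Tendsto.congr (fun n => ?_) h2
        rw [hF]
        simp [Set.indicator_of_mem hω]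
      exact le_of_eq htd.liminf_eq.symm
    · rw [Set.indicator_of_notMem hω]
      exact zero_le
  have hSpart : ∫⁻ ω, S.indicator g ω ∂ℙ ≤ B := by
    calc ∫⁻ ω, S.indicator g ω ∂ℙ ≤ ∫⁻ ω, Filter.liminf (fun n => F n ω) atTop ∂ℙ :=
          lintegral_mono hliminf
      _ ≤ Filter.liminf (fun n => ∫⁻ ω, F n ω ∂ℙ) atTop := lintegral_liminf_le hFmeas
      _ ≤ Filter.liminf (fun _ => B) atTop :=
          Filter.liminf_le_liminf (Filter.Eventually.of_forall hFle)
      _ = B := Filter.liminf_const B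
  have hScpart : ∫⁻ ω, Sᶜ.indicator g ω ∂ℙ ≤ 1 := by
    have hb : ∀ ω, Sᶜ.indicator g ω ≤ 1 := by
      intro ω
      by_cases hω : ω ∈ Sᶜ
      · rw [Set.indicator_of_mem hω, hg]
        simp only [hTnot ω hω, mul_zero, Real.exp_zero, ENNReal.ofReal_one]
        exact le_rfl
      · rw [Set.indicator_of_notMem hω]
        exact zero_le
    calc ∫⁻ ω, Sᶜ.indicator g ω ∂ℙ ≤ ∫⁻ _, 1 ∂ℙ := lintegral_mono hb
      _ = 1 := by rw [lintegral_one, measure_univ]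
  have hgint : ∫⁻ ω, g ω ∂ℙ ≠ ⊤ := by
    have hsplit : ∀ ω, g ω = S.indicator g ω + Sᶜ.indicator g ω := fun ω =>
      (Set.indicator_self_add_compl_apply S g ω).symm
    rw [lintegral_congr hsplit,
      lintegral_add_left (hgmeas.indicator hSmeas)]
    exact ne_top_of_le_ne_top (by simp [hB]) (add_le_add hSpart hScpart)
  refine ⟨((hTmeas.const_mul c).exp).aestronglyMeasurable, ?_⟩
  rw [hasFiniteIntegral_iff_ofReal (Filter.Eventually.of_forall fun ω => (Real.exp_pos _).le)]
  exact lt_top_iff_ne_top.2 hgint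


theorem exists_moment_exp_phi_Y
    {Ω : Type*} [MeasureSpace Ω] [IsProbabilityMeasure (ℙ : Measure Ω)]
    (η : ℤ → Ω → ℝ) (hηmeas : ∀ t, Measurable (η t))
    (hηindep : iIndepFun η ℙ)
    (hηident : ∀ t, IdentDistrib (η t) (η 0) ℙ ℙ)
    (φ : ℝ) (hφ : φ ∈ Set.Ioo (-1 : ℝ) 1)
    (Y : ℤ → Ω → ℝ)
    (hY : ∀ t ω, Y t ω = ∑' j : ℕ, φ ^ j * η (t - (j : ℤ)) ω)
    (α : ℝ) (hα : 0 < α) (L : ℝ → ℝ) (hL : SlowlyVarying L)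
    (h31 : ∀ x > (0 : ℝ), (ℙ {ω | x < Real.exp (η 0 ω)}).toReal = x ^ (-α) * L x)
    (h32 : φ < 0 → ∃ c > (0 : ℝ), ∀ x ≥ (1 : ℝ),
      (ℙ {ω | x < Real.exp (max (-η 0 ω) 0)}).toReal
        ≤ c * (ℙ {ω | x < Real.exp (η 0 ω)}).toReal) :
    ∃ ε > (0 : ℝ), Integrable (fun ω => Real.exp ((α + ε) * φ * Y 0 ω)) ℙ := by
  by_cases hφ0 : φ = 0
  · refine ⟨1, one_pos, ?_⟩
    have hfun : (fun ω => Real.exp ((α + 1) * φ * Y 0 ω)) = fun _ => (1:ℝ) := by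
      funext ω
      rw [hφ0]
      simp
    rw [hfun]
    exact integrable_const 1
  · have hβpos : 0 < |φ| := abs_pos.2 hφ0
    have hβ1 : |φ| < 1 := abs_lt.2 ⟨hφ.1, hφ.2⟩
    set β := |φ| with hβ
    set ε := α * (1 - β) / (2 * β) with hεdef
    have hεpos : 0 < ε := div_pos (mul_pos hα (by linarith)) (by linarith)
    refine ⟨ε, hεpos, ?_⟩
    set c := (α + ε) * φ with hc
    set s2 := (α + ε) * β with hs2
    have hαε : 0 < α + ε := by linarith
    have hs2c : |c| = s2 := by rw [hc, hs2, abs_mul, abs_of_pos hαε]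
    have hs2pos : 0 < s2 := mul_pos hαε hβpos
    have hs2α : s2 < α := by
      have hformula : s2 = α * β + α * (1 - β) / 2 := by
        rw [hs2, hεdef]
        field_simp
      nlinarith
    set s' := (s2 + α) / 2 with hs'
    have hs'1 : s2 < s' := by rw [hs']; linarith
    have hs'2 : s' < α := by rw [hs']; linarith
    obtain ⟨x0, hx01, htailX⟩ := dyadic_tail (η 0) α hα L hL h31 s' hs'2
    have hx0n : ∀ n : ℕ, (1:ℝ) ≤ x0 * 2 ^ n := by
      intro n
      have h2n : (1:ℝ) ≤ 2 ^ n := one_le_pow₀ (by norm_num)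
      nlinarith
    -- moment of exp(s2 * (η 0)⁺)
    have hM1 : ∫⁻ ω, ENNReal.ofReal (Real.exp (s2 * max (η 0 ω) 0)) ∂ℙ ≠ ⊤ := by
      have hZm : Measurable fun ω => Real.exp (max (η 0 ω) 0) :=
        ((hηmeas 0).max measurable_const).exp
      have htailZ : ∀ n : ℕ, ℙ {ω | x0 * 2 ^ n < Real.exp (max (η 0 ω) 0)}
          ≤ ENNReal.ofReal (1 * ((2:ℝ) ^ (-s')) ^ n) := by
        intro n
        have hset : {ω | x0 * 2 ^ n < Real.exp (max (η 0 ω) 0)}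
            = {ω | x0 * 2 ^ n < Real.exp (η 0 ω)} := by
          ext ω
          simpa using tail_iff_exp_max (η 0 ω) (x0 * 2 ^ n) (hx0n n)
        rw [hset, one_mul]
        exact htailX n
      have h := lintegral_rpow_ne_top (fun ω => Real.exp (max (η 0 ω) 0)) hZm
        (fun ω => Real.one_le_exp (le_max_right _ _)) s2 s' x0 1 hs2pos hs'1 hx01
        (by norm_num) htailZ
      have heq : (fun ω => ENNReal.ofReal (Real.exp (s2 * max (η 0 ω) 0)))
          = fun ω => ENNReal.ofReal (Real.exp (max (η 0 ω) 0) ^ s2) := by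
        funext ω
        rw [← Real.exp_mul, mul_comm]
      calc ∫⁻ ω, ENNReal.ofReal (Real.exp (s2 * max (η 0 ω) 0)) ∂ℙ
          = ∫⁻ ω, ENNReal.ofReal (Real.exp (max (η 0 ω) 0) ^ s2) ∂ℙ := by rw [heq]
        _ ≠ ⊤ := h
    -- the W package
    obtain ⟨W, hWmeas, hW0, hWfin, hWbd⟩ :
        ∃ W : Ω → ℝ, Measurable W ∧ (∀ ω, 0 ≤ W ω) ∧
          (∫⁻ ω, ENNReal.ofReal (W ω) ∂ℙ ≠ ⊤) ∧
          ∀ (t : ℤ) (ω : Ω), Real.exp (c * φ ^ t.natAbs * η 0 ω)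
            ≤ 1 + |φ| ^ t.natAbs * W ω := by
      have hθ : ∀ t : ℤ, 0 ≤ β ^ t.natAbs ∧ β ^ t.natAbs ≤ 1 :=
        fun t => ⟨pow_nonneg hβpos.le _, pow_le_one₀ hβpos.le hβ1.le⟩
      have habs : ∀ t : ℤ, |c * φ ^ t.natAbs| = β ^ t.natAbs * s2 := by
        intro t
        rw [abs_mul, hs2c, abs_pow, ← hβ]
        ring
      rcases lt_or_gt_of_ne hφ0 with hneg | hpos
      · -- φ < 0 : need both tails
        obtain ⟨c32, hc32, hineq⟩ := h32 hneg
        have hM2 : ∫⁻ ω, ENNReal.ofReal (Real.exp (s2 * max (-η 0 ω) 0)) ∂ℙ ≠ ⊤ := by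
          have hZm : Measurable fun ω => Real.exp (max (-η 0 ω) 0) :=
            (((hηmeas 0).neg).max measurable_const).exp
          have htailZ : ∀ n : ℕ, ℙ {ω | x0 * 2 ^ n < Real.exp (max (-η 0 ω) 0)}
              ≤ ENNReal.ofReal (c32 * ((2:ℝ) ^ (-s')) ^ n) := by
            intro n
            have h1 := hineq (x0 * 2 ^ n) (hx0n n)
            calc ℙ {ω | x0 * 2 ^ n < Real.exp (max (-η 0 ω) 0)}
                = ENNReal.ofReal ((ℙ {ω | x0 * 2 ^ n < Real.exp (max (-η 0 ω) 0)}).toReal) :=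
                  (ENNReal.ofReal_toReal (measure_ne_top _ _)).symm
              _ ≤ ENNReal.ofReal (c32 * (ℙ {ω | x0 * 2 ^ n < Real.exp (η 0 ω)}).toReal) :=
                  ENNReal.ofReal_le_ofReal h1
              _ = ENNReal.ofReal c32 * ℙ {ω | x0 * 2 ^ n < Real.exp (η 0 ω)} := by
                  rw [ENNReal.ofReal_mul hc32.le, ENNReal.ofReal_toReal (measure_ne_top _ _)]
              _ ≤ ENNReal.ofReal c32 * ENNReal.ofReal (((2:ℝ) ^ (-s')) ^ n) :=
                  mul_le_mul_right (htailX n) _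
              _ = ENNReal.ofReal (c32 * ((2:ℝ) ^ (-s')) ^ n) :=
                  (ENNReal.ofReal_mul hc32.le).symm
          have h := lintegral_rpow_ne_top (fun ω => Real.exp (max (-η 0 ω) 0)) hZm
            (fun ω => Real.one_le_exp (le_max_right _ _)) s2 s' x0 c32 hs2pos hs'1 hx01
            hc32.le htailZ
          have heq : (fun ω => ENNReal.ofReal (Real.exp (s2 * max (-η 0 ω) 0)))
              = fun ω => ENNReal.ofReal (Real.exp (max (-η 0 ω) 0) ^ s2) := by
            funext ω
            rw [← Real.exp_mul, mul_comm]
          calc ∫⁻ ω, ENNReal.ofReal (Real.exp (s2 * max (-η 0 ω) 0)) ∂ℙ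
              = ∫⁻ ω, ENNReal.ofReal (Real.exp (max (-η 0 ω) 0) ^ s2) ∂ℙ := by rw [heq]
            _ ≠ ⊤ := h
        refine ⟨fun ω => Real.exp (s2 * max (η 0 ω) 0) + Real.exp (s2 * max (-η 0 ω) 0),
          (((hηmeas 0).max measurable_const).const_mul s2).exp.add
            ((((hηmeas 0).neg).max measurable_const).const_mul s2).exp,
          fun ω => by positivity, ?_, ?_⟩
        · have hsplit : (fun ω => ENNReal.ofReal (Real.exp (s2 * max (η 0 ω) 0)
              + Real.exp (s2 * max (-η 0 ω) 0)))
              = fun ω => ENNReal.ofReal (Real.exp (s2 * max (η 0 ω) 0))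
                + ENNReal.ofReal (Real.exp (s2 * max (-η 0 ω) 0)) := by
            funext ω
            rw [ENNReal.ofReal_add (Real.exp_pos _).le (Real.exp_pos _).le]
          rw [hsplit, lintegral_add_left (((hηmeas 0).max measurable_const).const_mul s2).exp.ennreal_ofReal]
          exact ENNReal.add_ne_top.2 ⟨hM1, hM2⟩
        · intro t ω
          set θ := β ^ t.natAbs with hθdef
          have key : c * φ ^ t.natAbs * η 0 ω ≤ θ * (s2 * |η 0 ω|) := by
            calc c * φ ^ t.natAbs * η 0 ω ≤ |c * φ ^ t.natAbs * η 0 ω| := le_abs_self _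
              _ = |c * φ ^ t.natAbs| * |η 0 ω| := abs_mul _ _
              _ = θ * (s2 * |η 0 ω|) := by rw [habs t]; ring
          have h1 : Real.exp (c * φ ^ t.natAbs * η 0 ω)
              ≤ 1 + θ * Real.exp (s2 * |η 0 ω|) := by
            refine le_trans (Real.exp_le_exp.2 key) ?_
            exact exp_theta_bound (hθ t).1 (hθ t).2 (by positivity)
          have h2 : Real.exp (s2 * |η 0 ω|)
              ≤ Real.exp (s2 * max (η 0 ω) 0) + Real.exp (s2 * max (-η 0 ω) 0) := by
            rcases le_total 0 (η 0 ω) with h | h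
            · rw [abs_of_nonneg h]
              have : Real.exp (s2 * η 0 ω) ≤ Real.exp (s2 * max (η 0 ω) 0) :=
                Real.exp_le_exp.2 (mul_le_mul_of_nonneg_left (le_max_left _ _) hs2pos.le)
              nlinarith [Real.exp_pos (s2 * max (-η 0 ω) 0)]
            · rw [abs_of_nonpos h]
              have : Real.exp (s2 * -η 0 ω) ≤ Real.exp (s2 * max (-η 0 ω) 0) :=
                Real.exp_le_exp.2 (mul_le_mul_of_nonneg_left (le_max_left _ _) hs2pos.le)
              nlinarith [Real.exp_pos (s2 * max (η 0 ω) 0)]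
          calc Real.exp (c * φ ^ t.natAbs * η 0 ω) ≤ 1 + θ * Real.exp (s2 * |η 0 ω|) := h1
            _ ≤ 1 + θ * (Real.exp (s2 * max (η 0 ω) 0) + Real.exp (s2 * max (-η 0 ω) 0)) := by
                exact add_le_add_right (mul_le_mul_of_nonneg_left h2 (hθ t).1) _
            _ = 1 + |φ| ^ t.natAbs * (Real.exp (s2 * max (η 0 ω) 0)
                + Real.exp (s2 * max (-η 0 ω) 0)) := by rw [hθdef, hβ]
      · -- φ > 0 : only the right tail is needed
        refine ⟨fun ω => Real.exp (s2 * max (η 0 ω) 0),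
          (((hηmeas 0).max measurable_const).const_mul s2).exp,
          fun ω => (Real.exp_pos _).le, hM1, ?_⟩
        intro t ω
        set θ := β ^ t.natAbs with hθdef
        have hcpos : 0 ≤ c * φ ^ t.natAbs := by
          have : 0 < c := by
            rw [hc]
            exact mul_pos hαε hpos
          positivity
        have key : c * φ ^ t.natAbs * η 0 ω ≤ θ * (s2 * max (η 0 ω) 0) := by
          calc c * φ ^ t.natAbs * η 0 ω ≤ c * φ ^ t.natAbs * max (η 0 ω) 0 :=
              mul_le_mul_of_nonneg_left (le_max_left _ _) hcpos
            _ = |c * φ ^ t.natAbs| * max (η 0 ω) 0 := by rw [abs_of_nonneg hcpos]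
            _ = θ * (s2 * max (η 0 ω) 0) := by rw [habs t]; ring
        refine le_trans (Real.exp_le_exp.2 key) ?_
        have hb := exp_theta_bound (θ := θ) (a := s2 * max (η 0 ω) 0) (hθ t).1 (hθ t).2
          (mul_nonneg hs2pos.le (le_max_right _ _))
        simpa [hθdef, hβ] using hb
    -- conclude via the master lemma
    have hWint' : ∫⁻ ω, ENNReal.ofReal (W ω) ∂ℙ
        ≤ ENNReal.ofReal ((∫⁻ ω, ENNReal.ofReal (W ω) ∂ℙ).toReal) :=
      le_of_eq (ENNReal.ofReal_toReal hWfin).symm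
    have hmain := integrable_exp_mul_tsum η hηmeas hηindep hηident φ c hβ1 W hWmeas hW0
      ((∫⁻ ω, ENNReal.ofReal (W ω) ∂ℙ).toReal) ENNReal.toReal_nonneg hWint' hWbd
    have hfun : (fun ω => Real.exp ((α + ε) * φ * Y 0 ω))
        = fun ω => Real.exp (c * ∑' j : ℕ, φ ^ j * η ((0:ℤ) - (j:ℤ)) ω) := by
      funext ω
      rw [hY 0 ω, hc]
    rw [hfun]
    exact hmain
end

section
/- For every integer d ≥ 2 and every δ > 0, lim_{n→∞} n P( |Z_i| e^{η_{i-1}} > δ a_n for all i = 1,…,d ) = 0; hence any vague limit of n P(a_n^{-1}(Z_1 e^{η_0},…,Z_d e^{η_{d-1}}) ∈ ·) must be concentrated on the coordinate axes. -/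
open MeasureTheory ProbabilityTheory Filter
open scoped ENNReal

private lemma toReal_union_le {Ω : Type*} [MeasureSpace Ω] [IsProbabilityMeasure (ℙ : Measure Ω)]
    (A B : Set Ω) : (ℙ (A ∪ B)).toReal ≤ (ℙ A).toReal + (ℙ B).toReal := by
  have h1 := measure_union_le (μ := ℙ) A B
  have h2 : ((ℙ A + ℙ B)).toReal = (ℙ A).toReal + (ℙ B).toReal :=
    ENNReal.toReal_add (measure_ne_top _ _) (measure_ne_top _ _)
  rw [← h2]
  exact ENNReal.toReal_mono (ENNReal.add_ne_top.mpr ⟨measure_ne_top _ _, measure_ne_top _ _⟩) h1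

private lemma toReal_mono_meas {Ω : Type*} [MeasureSpace Ω] [IsProbabilityMeasure (ℙ : Measure Ω)]
    {A B : Set Ω} (h : A ⊆ B) : (ℙ A).toReal ≤ (ℙ B).toReal :=
  ENNReal.toReal_mono (measure_ne_top _ _) (measure_mono h)

private lemma toReal_prob_le_one {Ω : Type*} [MeasureSpace Ω]
    [IsProbabilityMeasure (ℙ : Measure Ω)] (A : Set Ω) : (ℙ A).toReal ≤ 1 := by
  calc (ℙ A).toReal ≤ (1 : ℝ≥0∞).toReal :=
    ENNReal.toReal_mono (by norm_num) prob_le_one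
  _ = 1 := by simp

private lemma geom_sum_le_inv_one_sub {r : ℝ} (h0 : 0 ≤ r) (h1 : r < 1) (n : ℕ) :
    ∑ i ∈ Finset.range n, r ^ i ≤ (1 - r)⁻¹ := by
  have := Summable.sum_le_tsum (Finset.range n) (fun i _ => pow_nonneg h0 i)
    (summable_geometric_of_lt_one h0 h1)
  rwa [tsum_geometric_of_lt_one h0 h1] at this


private lemma pow_upper_of_doubling (T : ℝ → ℝ) (x₀ p : ℝ)
    (hx₀ : 1 ≤ x₀) (hp : 0 < p)
    (hanti : ∀ ⦃x y : ℝ⦄, 0 < x → x ≤ y → T y ≤ T x)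
    (h1 : ∀ x : ℝ, 0 < x → T x ≤ 1) (hnn : ∀ x : ℝ, 0 ≤ T x)
    (hdb : ∀ x : ℝ, x₀ ≤ x → T (2 * x) ≤ 2 ^ (-p) * T x) :
    ∃ A : ℝ, 0 < A ∧ ∀ x : ℝ, 0 < x → T x ≤ A * x ^ (-p) := by
  have hx₀0 : (0:ℝ) < x₀ := lt_of_lt_of_le one_pos hx₀
  set A' : ℝ := (T x₀ + 1) * (2 * x₀) ^ p with hA'def
  have hA'pos : 0 < A' := by
    apply mul_pos (by linarith [hnn x₀])
    exact Real.rpow_pos_of_pos (by linarith) p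
  have hbase : ∀ x : ℝ, x₀ ≤ x → x ≤ 2 * x₀ → T x ≤ A' * x ^ (-p) := by
    intro x hx hx2
    have hxp : 0 < x := lt_of_lt_of_le hx₀0 hx
    have h1' : T x ≤ T x₀ := hanti hx₀0 hx
    have h2 : ((2:ℝ) * x₀) ^ (-p) ≤ x ^ (-p) := by
      rw [Real.rpow_neg (by linarith), Real.rpow_neg hxp.le]
      exact inv_anti₀ (Real.rpow_pos_of_pos hxp p)
        (Real.rpow_le_rpow hxp.le hx2 hp.le)
    have h3 : A' * ((2 * x₀) ^ (-p)) = T x₀ + 1 := by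
      rw [hA'def, mul_assoc, ← Real.rpow_add (by linarith)]
      simp
    calc T x ≤ T x₀ := h1'
    _ ≤ A' * ((2 * x₀) ^ (-p)) := by rw [h3]; linarith
    _ ≤ A' * x ^ (-p) := mul_le_mul_of_nonneg_left h2 hA'pos.le
  have key : ∀ n : ℕ, ∀ x : ℝ, x₀ ≤ x → x ≤ 2 ^ n * x₀ → T x ≤ A' * x ^ (-p) := by
    intro n
    induction n with
    | zero => intro x hx hx2; exact hbase x hx (by nlinarith)
    | succ n ih =>
      intro x hx hx2
      rcases le_or_gt x (2 * x₀) with h | h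
      · exact hbase x hx h
      · have hx2' : x / 2 ≤ 2 ^ n * x₀ := by
          rw [pow_succ] at hx2; nlinarith
        have hx₀' : x₀ ≤ x / 2 := by linarith
        have hxp : (0:ℝ) < x := by linarith
        have hhalfpos : 0 < x / 2 := by linarith
        have hd := hdb (x / 2) hx₀'
        rw [mul_div_cancel₀ _ (two_ne_zero)] at hd
        have h2 : T (x/2) ≤ A' * (x/2) ^ (-p) := ih (x/2) hx₀' hx2'
        have h3 : (x/2 : ℝ) ^ (-p) = x ^ (-p) * ((2:ℝ) ^ (-p))⁻¹ := by
          rw [Real.div_rpow hxp.le (by norm_num : (0:ℝ) ≤ 2), div_eq_mul_inv]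
        have h4 : (0:ℝ) < (2:ℝ) ^ (-p) := Real.rpow_pos_of_pos (by norm_num) _
        calc T x ≤ 2 ^ (-p) * T (x/2) := hd
        _ ≤ 2 ^ (-p) * (A' * (x/2) ^ (-p)) := mul_le_mul_of_nonneg_left h2 h4.le
        _ = A' * x ^ (-p) := by rw [h3]; field_simp
  refine ⟨A' + x₀ ^ p, by positivity, fun x hx => ?_⟩
  rcases le_or_gt x₀ x with h | h
  · obtain ⟨n, hn⟩ := pow_unbounded_of_one_lt (x / x₀) (one_lt_two (α := ℝ))
    have hxn : x ≤ 2 ^ n * x₀ := by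
      rw [div_lt_iff₀ hx₀0] at hn
      nlinarith
    have := key n x h hxn
    have hx' : 0 ≤ x ^ (-p) := (Real.rpow_pos_of_pos hx _).le
    nlinarith [Real.rpow_pos_of_pos hx₀0 p]
  · have h1' : T x ≤ 1 := h1 x hx
    have h2 : (1:ℝ) ≤ x₀ ^ p * x ^ (-p) := by
      rw [Real.rpow_neg hx.le]
      rw [← div_eq_mul_inv, le_div_iff₀ (Real.rpow_pos_of_pos hx _)]
      simpa using Real.rpow_le_rpow hx.le h.le hp.le
    have hx' : 0 ≤ x ^ (-p) := (Real.rpow_pos_of_pos hx _).le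
    nlinarith

private lemma pow_lower_of_doubling (T : ℝ → ℝ) (x₀ β : ℝ)
    (hx₀ : 1 ≤ x₀) (hβ : 0 < β)
    (hanti : ∀ ⦃x y : ℝ⦄, 0 < x → x ≤ y → T y ≤ T x)
    (hpos : 0 < T (2 * x₀))
    (hdb : ∀ x : ℝ, x₀ ≤ x → 2 ^ (-β) * T x ≤ T (2 * x)) :
    ∃ c : ℝ, 0 < c ∧ ∀ x : ℝ, x₀ ≤ x → c * x ^ (-β) ≤ T x := by
  have hx₀0 : (0:ℝ) < x₀ := lt_of_lt_of_le one_pos hx₀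
  have h2β : (0:ℝ) < (2:ℝ) ^ (-β) := Real.rpow_pos_of_pos (by norm_num) _
  set c : ℝ := T (2 * x₀) * x₀ ^ β * 2 ^ (-β) with hcdef
  have hcpos : 0 < c := by
    apply mul_pos (mul_pos hpos (Real.rpow_pos_of_pos hx₀0 _)) h2β
  have hbase : ∀ x : ℝ, x₀ ≤ x → x ≤ 2 * x₀ → c * x ^ (-β) ≤ T x := by
    intro x hx hx2
    have hxp : 0 < x := lt_of_lt_of_le hx₀0 hx
    have h1 : T (2 * x₀) ≤ T x := hanti hxp hx2
    have h2 : x₀ ^ β * x ^ (-β) ≤ 1 := by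
      rw [Real.rpow_neg hxp.le, ← div_eq_mul_inv, div_le_one (Real.rpow_pos_of_pos hxp _)]
      exact Real.rpow_le_rpow hx₀0.le hx hβ.le
    have h3 : (2:ℝ) ^ (-β) ≤ 1 := by
      rw [Real.rpow_neg (by norm_num)]
      rw [inv_le_one_iff₀]
      right
      exact Real.one_le_rpow (by norm_num) hβ.le
    calc c * x ^ (-β) = T (2*x₀) * (2 ^ (-β)) * (x₀ ^ β * x ^ (-β)) := by
          rw [hcdef]; ring
    _ ≤ T (2*x₀) * (2 ^ (-β)) * 1 := by
          apply mul_le_mul_of_nonneg_left h2 (by positivity)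
    _ ≤ T (2*x₀) * 1 * 1 := by
          apply mul_le_mul_of_nonneg_right _ (by norm_num)
          exact mul_le_mul_of_nonneg_left h3 hpos.le
    _ ≤ T x := by rw [mul_one, mul_one]; exact h1
  have key : ∀ n : ℕ, ∀ x : ℝ, x₀ ≤ x → x ≤ 2 ^ n * x₀ → c * x ^ (-β) ≤ T x := by
    intro n
    induction n with
    | zero => intro x hx hx2; exact hbase x hx (by nlinarith)
    | succ n ih =>
      intro x hx hx2
      rcases le_or_gt x (2 * x₀) with h | h
      · exact hbase x hx h
      · have hx2' : x / 2 ≤ 2 ^ n * x₀ := by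
          rw [pow_succ] at hx2; nlinarith
        have hx₀' : x₀ ≤ x / 2 := by linarith
        have hxp : (0:ℝ) < x := by linarith
        have hd := hdb (x / 2) hx₀'
        rw [mul_div_cancel₀ _ (two_ne_zero)] at hd
        have h2 : c * (x/2) ^ (-β) ≤ T (x/2) := ih (x/2) hx₀' hx2'
        have h3 : (x/2 : ℝ) ^ (-β) = x ^ (-β) * ((2:ℝ) ^ (-β))⁻¹ := by
          rw [Real.div_rpow hxp.le (by norm_num : (0:ℝ) ≤ 2), div_eq_mul_inv]
        calc c * x ^ (-β) = 2 ^ (-β) * (c * (x/2) ^ (-β)) := by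
              rw [h3]; field_simp
        _ ≤ 2 ^ (-β) * T (x/2) := mul_le_mul_of_nonneg_left h2 h2β.le
        _ ≤ T x := hd
  refine ⟨c, hcpos, fun x hx => ?_⟩
  obtain ⟨n, hn⟩ := pow_unbounded_of_one_lt (x / x₀) (one_lt_two (α := ℝ))
  have hxn : x ≤ 2 ^ n * x₀ := by
    rw [div_lt_iff₀ hx₀0] at hn
    nlinarith
  exact key n x hx hxn


private lemma prod_tail {Ω : Type*} [MeasureSpace Ω] [IsProbabilityMeasure (ℙ : Measure Ω)]
    (X Y : Ω → ℝ)
    (hInd : ∀ s t : ℝ, ℙ ({ω | s < X ω} ∩ {ω | t < Y ω}) = ℙ {ω | s < X ω} * ℙ {ω | t < Y ω})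
    (hYnn : ∀ ω, 0 ≤ Y ω)
    (p q AX BY : ℝ) (hq : 0 < q) (hqp : q < p) (hAX : 0 ≤ AX) (hBY : 0 ≤ BY)
    (tx : ∀ x : ℝ, 0 < x → (ℙ {ω | x < X ω}).toReal ≤ AX * x ^ (-p))
    (ty : ∀ y : ℝ, 0 < y → (ℙ {ω | y < Y ω}).toReal ≤ BY * y ^ (-q)) :
    ∀ u : ℝ, 1 ≤ u → (ℙ {ω | u < X ω * Y ω}).toReal ≤
      AX * (u ^ ((2:ℝ)/3)) ^ (-p) + (BY + AX * BY * 2 ^ q * (1 - 2 ^ (q - p))⁻¹) * u ^ (-q) := by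
  intro u hu
  have hu0 : (0:ℝ) < u := lt_of_lt_of_le one_pos hu
  set r : ℝ := (2:ℝ) ^ (q - p) with hrdef
  have hr0 : 0 ≤ r := (Real.rpow_pos_of_pos (by norm_num) _).le
  have hr1 : r < 1 := Real.rpow_lt_one_of_one_lt_of_neg (by norm_num) (by linarith)
  have huq : 0 ≤ u ^ (-q) := (Real.rpow_pos_of_pos hu0 _).le
  -- shell bound
  have shell : ∀ k : ℕ, (ℙ ({ω | (2:ℝ) ^ k < X ω} ∩ {ω | u / 2 ^ (k+1) < Y ω})).toReal ≤
      AX * BY * 2 ^ q * u ^ (-q) * r ^ k := by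
    intro k
    have h2k : (0:ℝ) < 2 ^ k := by positivity
    have h2k1 : (0:ℝ) < 2 ^ (k+1) := by positivity
    have hdiv : (0:ℝ) < u / 2 ^ (k+1) := by positivity
    rw [hInd, ENNReal.toReal_mul]
    have b1 := tx ((2:ℝ)^k) h2k
    have b2 := ty (u / 2^(k+1)) hdiv
    have hle := mul_le_mul b1 b2 ENNReal.toReal_nonneg (by positivity)
    refine hle.trans (le_of_eq ?_)
    have e1 : ((2:ℝ) ^ k) ^ (-p) = (2:ℝ) ^ ((-p) * k) := by
      rw [← Real.rpow_natCast 2 k, ← Real.rpow_mul (by norm_num), mul_comm]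
    have e2 : (u / 2 ^ (k+1)) ^ (-q) = u ^ (-q) * (2:ℝ) ^ (q * (k+1)) := by
      rw [Real.div_rpow hu0.le (by positivity), div_eq_mul_inv,
        ← Real.rpow_natCast 2 (k+1), ← Real.rpow_mul (by norm_num),
        ← Real.rpow_neg (by norm_num)]
      congr 2
      push_cast
      ring
    have e3 : r ^ k = (2:ℝ) ^ ((q - p) * k) := by
      rw [hrdef, ← Real.rpow_natCast ((2:ℝ)^(q-p)) k, ← Real.rpow_mul (by norm_num)]
    rw [e1, e2, e3]
    rw [show (AX * (2:ℝ) ^ (-p * k)) * (BY * (u ^ (-q) * (2:ℝ) ^ (q * (k+1)))) =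
      AX * BY * ((2:ℝ) ^ (-p*k) * (2:ℝ) ^ (q*(k+1))) * u ^ (-q) by ring]
    rw [← Real.rpow_add (by norm_num : (0:ℝ) < 2)]
    rw [show (-p * k + q * (k+1)) = q + (q - p) * k by push_cast; ring]
    rw [Real.rpow_add (by norm_num : (0:ℝ) < 2)]
    ring
  -- induction on shells
  have hS : ∀ k : ℕ, (ℙ ({ω | u < X ω * Y ω} ∩ {ω | X ω ≤ 2 ^ k})).toReal ≤
      BY * u ^ (-q) + AX * BY * 2 ^ q * u ^ (-q) * ∑ i ∈ Finset.range k, r ^ i := by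
    intro k
    induction k with
    | zero =>
      simp only [Finset.range_zero, Finset.sum_empty, mul_zero, add_zero]
      have hsub : {ω | u < X ω * Y ω} ∩ {ω | X ω ≤ 2 ^ 0} ⊆ {ω | u < Y ω} := by
        rintro ω ⟨h1, h2⟩
        simp only [pow_zero] at h2
        have : X ω * Y ω ≤ Y ω := mul_le_of_le_one_left (hYnn ω) h2
        exact lt_of_lt_of_le h1 this
      exact (toReal_mono_meas hsub).trans (ty u hu0)
    | succ k ih =>
      have hsub : {ω | u < X ω * Y ω} ∩ {ω | X ω ≤ 2 ^ (k+1)} ⊆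
          ({ω | u < X ω * Y ω} ∩ {ω | X ω ≤ 2 ^ k}) ∪
          ({ω | (2:ℝ) ^ k < X ω} ∩ {ω | u / 2 ^ (k+1) < Y ω}) := by
        rintro ω ⟨h1, h2⟩
        rcases le_or_gt (X ω) (2 ^ k) with h | h
        · exact Or.inl ⟨h1, h⟩
        · refine Or.inr ⟨h, ?_⟩
          have h3 : X ω * Y ω ≤ 2 ^ (k+1) * Y ω :=
            mul_le_mul_of_nonneg_right h2 (hYnn ω)
          have : u < 2 ^ (k+1) * Y ω := lt_of_lt_of_le h1 h3
          simp only [Set.mem_setOf_eq]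
          rw [div_lt_iff₀' (by positivity)]
          exact this
      calc (ℙ ({ω | u < X ω * Y ω} ∩ {ω | X ω ≤ 2 ^ (k+1)})).toReal
          ≤ (ℙ (({ω | u < X ω * Y ω} ∩ {ω | X ω ≤ 2 ^ k}) ∪
            ({ω | (2:ℝ) ^ k < X ω} ∩ {ω | u / 2 ^ (k+1) < Y ω}))).toReal :=
            toReal_mono_meas hsub
        _ ≤ (ℙ ({ω | u < X ω * Y ω} ∩ {ω | X ω ≤ 2 ^ k})).toReal +
            (ℙ ({ω | (2:ℝ) ^ k < X ω} ∩ {ω | u / 2 ^ (k+1) < Y ω})).toReal :=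
            toReal_union_le _ _
        _ ≤ (BY * u ^ (-q) + AX * BY * 2 ^ q * u ^ (-q) * ∑ i ∈ Finset.range k, r ^ i)
            + AX * BY * 2 ^ q * u ^ (-q) * r ^ k := add_le_add ih (shell k)
        _ = BY * u ^ (-q) + AX * BY * 2 ^ q * u ^ (-q) * ∑ i ∈ Finset.range (k+1), r ^ i := by
            rw [Finset.sum_range_succ]; ring
  -- choose K with u^(2/3) ≤ 2^K
  obtain ⟨K, hK⟩ := pow_unbounded_of_one_lt (u ^ ((2:ℝ)/3)) (one_lt_two (α := ℝ))
  have hcover : {ω | u < X ω * Y ω} ⊆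
      ({ω | u < X ω * Y ω} ∩ {ω | X ω ≤ 2 ^ K}) ∪ {ω | u ^ ((2:ℝ)/3) < X ω} := by
    intro ω h1
    rcases le_or_gt (X ω) (2 ^ K) with h | h
    · exact Or.inl ⟨h1, h⟩
    · exact Or.inr (lt_trans hK h)
  have hmain := (toReal_mono_meas hcover).trans (toReal_union_le _ _)
  have hgeo : ∑ i ∈ Finset.range K, r ^ i ≤ (1 - r)⁻¹ := geom_sum_le_inv_one_sub hr0 hr1 K
  have htail' := tx (u ^ ((2:ℝ)/3)) (Real.rpow_pos_of_pos hu0 _)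
  have h2q : (0:ℝ) ≤ AX * BY * 2 ^ q * u ^ (-q) := by positivity
  calc (ℙ {ω | u < X ω * Y ω}).toReal
      ≤ (ℙ ({ω | u < X ω * Y ω} ∩ {ω | X ω ≤ 2 ^ K})).toReal +
        (ℙ {ω | u ^ ((2:ℝ)/3) < X ω}).toReal := hmain
    _ ≤ (BY * u ^ (-q) + AX * BY * 2 ^ q * u ^ (-q) * ∑ i ∈ Finset.range K, r ^ i)
        + AX * (u ^ ((2:ℝ)/3)) ^ (-p) := add_le_add (hS K) htail'
    _ ≤ (BY * u ^ (-q) + AX * BY * 2 ^ q * u ^ (-q) * (1 - r)⁻¹)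
        + AX * (u ^ ((2:ℝ)/3)) ^ (-p) := by
        gcongr
    _ = AX * (u ^ ((2:ℝ)/3)) ^ (-p) + (BY + AX * BY * 2 ^ q * (1 - 2 ^ (q - p))⁻¹) * u ^ (-q) := by
        rw [hrdef]; ring


set_option maxHeartbeats 2000000

theorem egarch_joint_exceedances_negligible
    {Ω : Type*} [MeasureSpace Ω] [IsProbabilityMeasure (ℙ : Measure Ω)]
    (Z : ℤ → Ω → ℝ) (hZmeas : ∀ t, Measurable (Z t))
    (hZindep : iIndepFun Z ℙ)
    (hZident : ∀ t, IdentDistrib (Z t) (Z 0) ℙ ℙ)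
    (α₀ γ₀ δ₀ : ℝ) (hα₀ : 0 < α₀) (hγ₀ : 0 < γ₀) (hδ₀ : 0 < δ₀)
    (φ : ℝ) (hφ : φ ∈ Set.Ioo (-1 : ℝ) 1)
    (η : ℤ → Ω → ℝ)
    (hη : ∀ t ω, η t ω = 0.5 * (α₀ / (1 - φ) + γ₀ * Z t ω + δ₀ * |Z t ω|))
    (α : ℝ) (hα : 0 < α) (L : ℝ → ℝ) (hL : SlowlyVarying L)
    (htail : ∀ x > (0 : ℝ), (ℙ {ω | x < Real.exp (η 0 ω)}).toReal = x ^ (-α) * L x)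
    (hZmom : ∀ h > (0 : ℝ), Integrable (fun ω => |Z 0 ω| ^ h) ℙ)
    (a : ℕ → ℝ) (ha : ∀ n, 0 < a n)
    (hna : Tendsto (fun n : ℕ => (n : ℝ) * (ℙ {ω | a n < Real.exp (η 0 ω)}).toReal)
      atTop (nhds 1)) :
    ∀ d : ℕ, 2 ≤ d → ∀ δ > (0 : ℝ),
      Tendsto (fun n : ℕ => (n : ℝ) *
          (ℙ {ω | ∀ i : ℤ, 1 ≤ i → i ≤ (d : ℤ) →
            δ * a n < |Z i ω| * Real.exp (η (i - 1) ω)}).toReal)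
        atTop (nhds 0) := by
  -- basic setup
  set F : ℝ → ℝ := fun z => Real.exp (0.5 * (α₀ / (1 - φ) + γ₀ * z + δ₀ * |z|)) with hFdef
  have hF : Measurable F := by
    rw [hFdef]
    fun_prop
  have hexpη : ∀ (t : ℤ) ω, Real.exp (η t ω) = F (Z t ω) := fun t ω => by
    rw [hη t ω]
  set T : ℝ → ℝ := fun x => (ℙ {ω | x < Real.exp (η 0 ω)}).toReal with hTdef
  have hTanti : ∀ ⦃x y : ℝ⦄, 0 < x → x ≤ y → T y ≤ T x := by
    intro x y _ hxy
    exact toReal_mono_meas (fun ω hω => lt_of_le_of_lt hxy hω)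
  have hT1 : ∀ x : ℝ, 0 < x → T x ≤ 1 := fun x _ => toReal_prob_le_one _
  have hTnn : ∀ x : ℝ, 0 ≤ T x := fun x => ENNReal.toReal_nonneg
  have hTpos : ∀ x : ℝ, 0 < x → 0 < T x := by
    intro x hx
    have := htail x hx
    rw [hTdef]; simp only
    rw [this]
    exact mul_pos (Real.rpow_pos_of_pos hx _) (hL.2.1 x hx)
  -- slow variation at ratio 2 gives doubling bounds
  have hsl := hL.2.2 2 (by norm_num)
  have h2a : (1:ℝ) < 2 ^ (α/8 : ℝ) := by
    rw [show (1:ℝ) = (2:ℝ) ^ (0:ℝ) by simp]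
    exact Real.rpow_lt_rpow_of_exponent_lt one_lt_two (by positivity)
  have h2b : (2:ℝ) ^ (-(α/8) : ℝ) < 1 := by
    rw [show (1:ℝ) = (2:ℝ) ^ (0:ℝ) by simp]
    exact Real.rpow_lt_rpow_of_exponent_lt one_lt_two (by simp; positivity)
  obtain ⟨x₁, hx₁⟩ := eventually_atTop.mp
    ((hsl.eventually_lt_const h2a).and (hsl.eventually_const_lt h2b))
  set x₀ : ℝ := max x₁ 1 with hx₀def
  have hx₀1 : (1:ℝ) ≤ x₀ := le_max_right _ _
  have hdb_up : ∀ x : ℝ, x₀ ≤ x → T (2 * x) ≤ 2 ^ (-((7/8)*α)) * T x := by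
    intro x hx
    have hx0 : (0:ℝ) < x := lt_of_lt_of_le one_pos (hx₀1.trans hx)
    have hLx : 0 < L x := hL.2.1 x hx0
    have hLL : L (2 * x) < 2 ^ (α/8 : ℝ) * L x := by
      have := (hx₁ x ((le_max_left _ _).trans hx)).1
      rwa [div_lt_iff₀ hLx] at this
    have ht2 : T (2 * x) = (2 * x) ^ (-α) * L (2 * x) := htail _ (by positivity)
    have htx : T x = x ^ (-α) * L x := htail x hx0
    have hmul : ((2:ℝ) * x) ^ (-α) = (2:ℝ) ^ (-α) * x ^ (-α) :=
      Real.mul_rpow (by norm_num) hx0.le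
    have hee : (2:ℝ) ^ (-α) * (2:ℝ) ^ (α/8 : ℝ) = 2 ^ (-((7/8)*α)) := by
      rw [← Real.rpow_add (by norm_num : (0:ℝ) < 2)]
      congr 1; ring
    calc T (2 * x) = (2 * x) ^ (-α) * L (2 * x) := ht2
    _ ≤ (2 * x) ^ (-α) * (2 ^ (α/8 : ℝ) * L x) :=
        mul_le_mul_of_nonneg_left hLL.le (Real.rpow_nonneg (by positivity) _)
    _ = (2 ^ (-α) * 2 ^ (α/8 : ℝ)) * (x ^ (-α) * L x) := by rw [hmul]; ring
    _ = 2 ^ (-((7/8)*α)) * T x := by rw [hee, htx]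
  have hdb_lo : ∀ x : ℝ, x₀ ≤ x → 2 ^ (-((9/8)*α)) * T x ≤ T (2 * x) := by
    intro x hx
    have hx0 : (0:ℝ) < x := lt_of_lt_of_le one_pos (hx₀1.trans hx)
    have hLx : 0 < L x := hL.2.1 x hx0
    have hLL : 2 ^ (-(α/8) : ℝ) * L x < L (2 * x) := by
      have := (hx₁ x ((le_max_left _ _).trans hx)).2
      rwa [lt_div_iff₀ hLx] at this
    have ht2 : T (2 * x) = (2 * x) ^ (-α) * L (2 * x) := htail _ (by positivity)
    have htx : T x = x ^ (-α) * L x := htail x hx0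
    have hmul : ((2:ℝ) * x) ^ (-α) = (2:ℝ) ^ (-α) * x ^ (-α) :=
      Real.mul_rpow (by norm_num) hx0.le
    have hee : (2:ℝ) ^ (-α) * (2:ℝ) ^ (-(α/8) : ℝ) = 2 ^ (-((9/8)*α)) := by
      rw [← Real.rpow_add (by norm_num : (0:ℝ) < 2)]
      congr 1; ring
    calc 2 ^ (-((9/8)*α)) * T x = (2 ^ (-α) * 2 ^ (-(α/8) : ℝ)) * (x ^ (-α) * L x) := by
          rw [hee, htx]
    _ = (2 * x) ^ (-α) * (2 ^ (-(α/8) : ℝ) * L x) := by rw [hmul]; ring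
    _ ≤ (2 * x) ^ (-α) * L (2 * x) :=
        mul_le_mul_of_nonneg_left hLL.le (Real.rpow_nonneg (by positivity) _)
    _ = T (2 * x) := ht2.symm
  obtain ⟨A, hApos, hA⟩ := pow_upper_of_doubling T x₀ ((7/8)*α) hx₀1 (by positivity)
    hTanti hT1 hTnn hdb_up
  obtain ⟨c, hcpos, hc⟩ := pow_lower_of_doubling T x₀ ((9/8)*α) hx₀1 (by positivity)
    hTanti (hTpos _ (by positivity)) hdb_lo
  -- Markov bound on tails of |Z i|
  set CZ : ℝ := ∫ ω, |Z 0 ω| ^ (8*α : ℝ) with hCZdef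
  have hCZnn : 0 ≤ CZ := integral_nonneg fun ω => Real.rpow_nonneg (abs_nonneg _) _
  have hG0 : ∀ t : ℝ, 0 < t → (ℙ {ω | t < |Z 0 ω|}).toReal ≤ CZ * t ^ (-(8*α)) := by
    intro t ht
    have hsub : {ω | t < |Z 0 ω|} ⊆ {ω | t ^ (8*α : ℝ) ≤ |Z 0 ω| ^ (8*α : ℝ)} := by
      intro ω hω
      exact (Real.rpow_le_rpow ht.le (le_of_lt hω) (by positivity))
    have hmar := mul_meas_ge_le_integral_of_nonneg (μ := ℙ)
      (Filter.Eventually.of_forall fun ω => Real.rpow_nonneg (abs_nonneg (Z 0 ω)) (8*α))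
      (hZmom (8*α) (by positivity)) (t ^ (8*α : ℝ))
    have htp : (0:ℝ) < t ^ (8*α : ℝ) := Real.rpow_pos_of_pos ht _
    have h2 : (ℙ {ω | t ^ (8*α : ℝ) ≤ |Z 0 ω| ^ (8*α : ℝ)}).toReal ≤ CZ / t ^ (8*α : ℝ) := by
      rw [le_div_iff₀ htp, mul_comm]
      exact hmar
    calc (ℙ {ω | t < |Z 0 ω|}).toReal
        ≤ (ℙ {ω | t ^ (8*α : ℝ) ≤ |Z 0 ω| ^ (8*α : ℝ)}).toReal := toReal_mono_meas hsub
    _ ≤ CZ / t ^ (8*α : ℝ) := h2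
    _ = CZ * t ^ (-(8*α)) := by rw [Real.rpow_neg ht.le, div_eq_mul_inv]
  have hG : ∀ (i : ℤ) (t : ℝ), 0 < t → (ℙ {ω | t < |Z i ω|}).toReal ≤ CZ * t ^ (-(8*α)) := by
    intro i t ht
    have hs : MeasurableSet {z : ℝ | t < |z|} := measurableSet_lt measurable_const measurable_abs
    have heq : ℙ {ω | t < |Z i ω|} = ℙ {ω | t < |Z 0 ω|} := (hZident i).measure_mem_eq hs
    rw [heq]
    exact hG0 t ht
  -- tail of exp (η 1) agrees with T
  have hTeta1 : ∀ y : ℝ, ℙ {ω | y < Real.exp (η 1 ω)} = ℙ {ω | y < Real.exp (η 0 ω)} := by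
    intro y
    have hs : MeasurableSet {z : ℝ | y < F z} := measurableSet_lt measurable_const hF
    have h := (hZident 1).measure_mem_eq hs
    have e1 : {ω | y < Real.exp (η 1 ω)} = Z 1 ⁻¹' {z | y < F z} := by
      ext ω; simp only [Set.mem_setOf_eq, Set.mem_preimage, hexpη 1 ω]
    have e0 : {ω | y < Real.exp (η 0 ω)} = Z 0 ⁻¹' {z | y < F z} := by
      ext ω; simp only [Set.mem_setOf_eq, Set.mem_preimage, hexpη 0 ω]
    rw [e1, e0]
    exact h
  -- independence of exp (η 0) and the pair-based factor
  have hpair : IndepFun (fun ω => (Z 1 ω, Z 2 ω)) (Z 0) ℙ :=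
    hZindep.indepFun_prodMk hZmeas 1 2 0 (by decide) (by decide)
  have hgmeas : Measurable (fun pr : ℝ × ℝ => |pr.1| * F pr.1 * |pr.2|) := by fun_prop
  have hIndXY : ∀ s t : ℝ,
      ℙ ({ω | s < Real.exp (η 0 ω)} ∩ {ω | t < |Z 1 ω| * Real.exp (η 1 ω) * |Z 2 ω|}) =
      ℙ {ω | s < Real.exp (η 0 ω)} * ℙ {ω | t < |Z 1 ω| * Real.exp (η 1 ω) * |Z 2 ω|} := by
    intro s t
    have hXY : IndepFun (F ∘ Z 0)
        ((fun pr : ℝ × ℝ => |pr.1| * F pr.1 * |pr.2|) ∘ (fun ω => (Z 1 ω, Z 2 ω))) ℙ :=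
      (hpair.comp hgmeas hF).symm
    have h := hXY.measure_inter_preimage_eq_mul (Set.Ioi s) (Set.Ioi t)
      measurableSet_Ioi measurableSet_Ioi
    have e1 : (F ∘ Z 0) ⁻¹' (Set.Ioi s) = {ω | s < Real.exp (η 0 ω)} := by
      ext ω; simp only [Set.mem_preimage, Function.comp_apply, Set.mem_Ioi,
        Set.mem_setOf_eq, hexpη 0 ω]
    have e2 : ((fun pr : ℝ × ℝ => |pr.1| * F pr.1 * |pr.2|) ∘ (fun ω => (Z 1 ω, Z 2 ω))) ⁻¹'
        (Set.Ioi t) = {ω | t < |Z 1 ω| * Real.exp (η 1 ω) * |Z 2 ω|} := by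
      ext ω; simp only [Set.mem_preimage, Function.comp_apply, Set.mem_Ioi,
        Set.mem_setOf_eq, hexpη 1 ω]
    rw [e1, e2] at h
    exact h
  -- tail bound for the second factor Y
  set B : ℝ := max 1 (2*CZ + A) with hBdef
  have hB1 : (1:ℝ) ≤ B := le_max_left _ _
  have ty : ∀ y : ℝ, 0 < y →
      (ℙ {ω | y < |Z 1 ω| * Real.exp (η 1 ω) * |Z 2 ω|}).toReal ≤ B * y ^ (-((21/32)*α)) := by
    intro y hy
    rcases lt_or_ge y 1 with hy1 | hy1
    · have h1 : (1:ℝ) ≤ y ^ (-((21/32)*α)) :=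
        Real.one_le_rpow_of_pos_of_le_one_of_nonpos hy hy1.le (by nlinarith)
      have := toReal_prob_le_one ({ω | y < |Z 1 ω| * Real.exp (η 1 ω) * |Z 2 ω|} : Set Ω)
      nlinarith
    · -- y ≥ 1 : split into three tails
      have hsub : {ω | y < |Z 1 ω| * Real.exp (η 1 ω) * |Z 2 ω|} ⊆
          ({ω | y ^ ((1:ℝ)/8) < |Z 1 ω|} ∪ {ω | y ^ ((3:ℝ)/4) < Real.exp (η 1 ω)}) ∪
          {ω | y ^ ((1:ℝ)/8) < |Z 2 ω|} := by
        intro ω hω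
        by_contra hcon
        simp only [Set.mem_union, Set.mem_setOf_eq, not_or, not_lt] at hcon
        obtain ⟨⟨c1, c2⟩, c3⟩ := hcon
        have hprd : |Z 1 ω| * Real.exp (η 1 ω) * |Z 2 ω| ≤
            y ^ ((1:ℝ)/8) * y ^ ((3:ℝ)/4) * y ^ ((1:ℝ)/8) := by
          apply mul_le_mul _ c3 (abs_nonneg _) (by positivity)
          exact mul_le_mul c1 c2 (Real.exp_pos _).le (by positivity)
        rw [← Real.rpow_add hy, ← Real.rpow_add hy,
          show ((1:ℝ)/8 + 3/4 + 1/8) = 1 by norm_num, Real.rpow_one] at hprd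
        exact absurd (lt_of_lt_of_le hω hprd) (lt_irrefl y)
      have hy18 : (0:ℝ) < y ^ ((1:ℝ)/8) := Real.rpow_pos_of_pos hy _
      have b1 : (ℙ {ω | y ^ ((1:ℝ)/8) < |Z 1 ω|}).toReal ≤ CZ * y ^ (-((21/32)*α)) := by
        refine (hG 1 _ hy18).trans ?_
        rw [← Real.rpow_mul hy.le]
        apply mul_le_mul_of_nonneg_left _ hCZnn
        apply Real.rpow_le_rpow_of_exponent_le hy1
        nlinarith
      have b3 : (ℙ {ω | y ^ ((1:ℝ)/8) < |Z 2 ω|}).toReal ≤ CZ * y ^ (-((21/32)*α)) := by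
        refine (hG 2 _ hy18).trans ?_
        rw [← Real.rpow_mul hy.le]
        apply mul_le_mul_of_nonneg_left _ hCZnn
        apply Real.rpow_le_rpow_of_exponent_le hy1
        nlinarith
      have b2 : (ℙ {ω | y ^ ((3:ℝ)/4) < Real.exp (η 1 ω)}).toReal ≤ A * y ^ (-((21/32)*α)) := by
        have := hA (y ^ ((3:ℝ)/4)) (Real.rpow_pos_of_pos hy _)
        rw [hTeta1]
        refine this.trans ?_
        rw [← Real.rpow_mul hy.le]
        apply mul_le_mul_of_nonneg_left _ hApos.le
        apply le_of_eq
        congr 1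
        ring
      calc (ℙ {ω | y < |Z 1 ω| * Real.exp (η 1 ω) * |Z 2 ω|}).toReal
          ≤ (ℙ (({ω | y ^ ((1:ℝ)/8) < |Z 1 ω|} ∪ {ω | y ^ ((3:ℝ)/4) < Real.exp (η 1 ω)}) ∪
            {ω | y ^ ((1:ℝ)/8) < |Z 2 ω|})).toReal := toReal_mono_meas hsub
      _ ≤ ((ℙ {ω | y ^ ((1:ℝ)/8) < |Z 1 ω|}).toReal +
            (ℙ {ω | y ^ ((3:ℝ)/4) < Real.exp (η 1 ω)}).toReal) +
            (ℙ {ω | y ^ ((1:ℝ)/8) < |Z 2 ω|}).toReal := by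
          refine (toReal_union_le _ _).trans ?_
          gcongr
          exact toReal_union_le _ _
      _ ≤ (CZ * y ^ (-((21/32)*α)) + A * y ^ (-((21/32)*α))) + CZ * y ^ (-((21/32)*α)) := by
          gcongr
      _ = (2*CZ + A) * y ^ (-((21/32)*α)) := by ring
      _ ≤ B * y ^ (-((21/32)*α)) := by
          apply mul_le_mul_of_nonneg_right (le_max_right _ _) (by positivity)
  have hB0 : (0:ℝ) ≤ B := le_trans zero_le_one hB1
  -- product tail bound
  have hprod := prod_tail (fun ω => Real.exp (η 0 ω))
    (fun ω => |Z 1 ω| * Real.exp (η 1 ω) * |Z 2 ω|) hIndXY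
    (fun ω => by positivity) ((7/8)*α) ((21/32)*α) A B (by positivity) (by nlinarith)
    hApos.le hB0 hA ty
  set B' : ℝ := B + A * B * 2 ^ ((21/32)*α) * (1 - 2 ^ ((21/32)*α - (7/8)*α))⁻¹ with hB'def
  have hB'nn : 0 ≤ B' := by
    have hlt : (2:ℝ) ^ ((21/32)*α - (7/8)*α) < 1 :=
      Real.rpow_lt_one_of_one_lt_of_neg one_lt_two (by nlinarith)
    have h0 : (0:ℝ) ≤ (1 - 2 ^ ((21/32)*α - (7/8)*α))⁻¹ := inv_nonneg.mpr (by linarith)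
    have h1 : (0:ℝ) ≤ 2 ^ ((21/32)*α) := (Real.rpow_pos_of_pos two_pos _).le
    exact add_nonneg hB0 (mul_nonneg (mul_nonneg (mul_nonneg hApos.le hB0) h1) h0)
  -- `a n → ∞`
  have hT0 : Tendsto (fun n : ℕ => T (a n)) atTop (nhds 0) := by
    have h1 : Tendsto (fun n : ℕ => (n:ℝ)⁻¹ * ((n:ℝ) * T (a n))) atTop (nhds (0 * 1)) :=
      tendsto_inv_atTop_nhds_zero_nat.mul hna
    rw [zero_mul] at h1
    apply Tendsto.congr' _ h1
    filter_upwards [eventually_ge_atTop 1] with n hn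
    have hn0 : (n:ℝ) ≠ 0 := Nat.cast_ne_zero.mpr (by omega)
    field_simp
  have haT : Tendsto a atTop atTop := by
    rw [tendsto_atTop]
    intro b
    have hb : 0 < T (max b 1) := hTpos _ (by positivity)
    filter_upwards [hT0.eventually_lt_const hb] with n hn
    by_contra hcon
    push_neg at hcon
    have h2 : T (max b 1) ≤ T (a n) := hTanti (ha n) (hcon.le.trans (le_max_left b 1))
    linarith
  -- `n` is at most a power of `a n`, eventually
  have hn_le : ∀ᶠ n : ℕ in atTop, (n:ℝ) ≤ (2/c) * (a n) ^ ((9/8)*α) := by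
    filter_upwards [hna.eventually_lt_const (by norm_num : (1:ℝ) < 2),
      haT.eventually_ge_atTop x₀] with n h2 hx
    have hTa := hc (a n) hx
    have hden : 0 < c * (a n) ^ (-((9/8)*α)) :=
      mul_pos hcpos (Real.rpow_pos_of_pos (ha n) _)
    have hTapos : 0 < T (a n) := lt_of_lt_of_le hden hTa
    have h3 : (n:ℝ) ≤ 2 / T (a n) := by
      rw [le_div_iff₀ hTapos]; exact h2.le
    have h4 : 2 / T (a n) ≤ 2 / (c * (a n) ^ (-((9/8)*α))) := by
      rw [div_le_div_iff₀ hTapos hden]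
      nlinarith [hTa]
    have e : 2 / (c * (a n) ^ (-((9/8)*α))) = (2/c) * (a n) ^ ((9/8)*α) := by
      have hane : (a n) ^ ((9/8)*α) ≠ 0 := (Real.rpow_pos_of_pos (ha n) _).ne'
      rw [Real.rpow_neg (ha n).le]
      field_simp
    exact h3.trans (h4.trans (le_of_eq e))
  -- conclusion
  intro d hd δ hδ
  have hd2 : (2:ℤ) ≤ (d:ℤ) := by exact_mod_cast hd
  have hincl : ∀ n : ℕ,
      {ω | ∀ i : ℤ, 1 ≤ i → i ≤ (d:ℤ) → δ * a n < |Z i ω| * Real.exp (η (i-1) ω)} ⊆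
      {ω | (δ * a n) * (δ * a n) <
        Real.exp (η 0 ω) * (|Z 1 ω| * Real.exp (η 1 ω) * |Z 2 ω|)} := by
    intro n ω hω
    have h1 := hω 1 le_rfl (by linarith)
    have h2 := hω 2 (by norm_num) hd2
    norm_num at h1 h2
    have hpos : 0 < δ * a n := mul_pos hδ (ha n)
    have h3 := mul_lt_mul'' h1 h2 hpos.le hpos.le
    rw [show (|Z 1 ω| * Real.exp (η 0 ω)) * (|Z 2 ω| * Real.exp (η 1 ω)) =
      Real.exp (η 0 ω) * (|Z 1 ω| * Real.exp (η 1 ω) * |Z 2 ω|) by ring] at h3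
    exact h3
  set C₁ : ℝ := (2/c) * (A * δ ^ (-((7/6)*α))) with hC1
  set C₂ : ℝ := (2/c) * (B' * δ ^ (-((21/16)*α))) with hC2
  have hg0 : Tendsto (fun n : ℕ => C₁ * (a n) ^ (-(α/24)) + C₂ * (a n) ^ (-((3/16)*α)))
      atTop (nhds 0) := by
    have t1 : Tendsto (fun n : ℕ => (a n) ^ (-(α/24))) atTop (nhds 0) :=
      (tendsto_rpow_neg_atTop (by positivity)).comp haT
    have t2 : Tendsto (fun n : ℕ => (a n) ^ (-((3/16)*α))) atTop (nhds 0) :=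
      (tendsto_rpow_neg_atTop (by positivity)).comp haT
    have := (t1.const_mul C₁).add (t2.const_mul C₂)
    simpa using this
  apply squeeze_zero'
    (Filter.Eventually.of_forall fun n => mul_nonneg (Nat.cast_nonneg n) ENNReal.toReal_nonneg)
    _ hg0
  filter_upwards [hn_le, haT.eventually_ge_atTop (1/δ)] with n hnle hage
  have hv0 : 0 < δ * a n := mul_pos hδ (ha n)
  have hv1 : (1:ℝ) ≤ δ * a n := by
    rw [div_le_iff₀ hδ] at hage
    linarith [hage]
  have hu1 : (1:ℝ) ≤ (δ * a n) * (δ * a n) := by nlinarith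
  have hP := (toReal_mono_meas (hincl n)).trans (hprod ((δ * a n) * (δ * a n)) hu1)
  have hvv : (δ * a n) * (δ * a n) = (δ * a n) ^ (2:ℝ) := by
    rw [show (2:ℝ) = ((2:ℕ):ℝ) by norm_num, Real.rpow_natCast]
    ring
  have e4 : (((δ * a n) * (δ * a n)) ^ ((2:ℝ)/3)) ^ (-((7/8)*α)) = (δ * a n) ^ (-((7/6)*α)) := by
    rw [hvv, ← Real.rpow_mul hv0.le, ← Real.rpow_mul hv0.le]
    congr 1; ring
  have e5 : ((δ * a n) * (δ * a n)) ^ (-((21/32)*α)) = (δ * a n) ^ (-((21/16)*α)) := by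
    rw [hvv, ← Real.rpow_mul hv0.le]
    congr 1; ring
  have e6 : (δ * a n) ^ (-((7/6)*α)) = δ ^ (-((7/6)*α)) * (a n) ^ (-((7/6)*α)) :=
    Real.mul_rpow hδ.le (ha n).le
  have e7 : (δ * a n) ^ (-((21/16)*α)) = δ ^ (-((21/16)*α)) * (a n) ^ (-((21/16)*α)) :=
    Real.mul_rpow hδ.le (ha n).le
  rw [e4, e5, e6, e7] at hP
  have hfn : (n:ℝ) * (ℙ {ω | ∀ i : ℤ, 1 ≤ i → i ≤ (d:ℤ) →
      δ * a n < |Z i ω| * Real.exp (η (i-1) ω)}).toReal ≤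
      ((2/c) * (a n) ^ ((9/8)*α)) *
      (A * (δ ^ (-((7/6)*α)) * (a n) ^ (-((7/6)*α))) +
        B' * (δ ^ (-((21/16)*α)) * (a n) ^ (-((21/16)*α)))) := by
    apply mul_le_mul hnle hP ENNReal.toReal_nonneg
    exact mul_nonneg (by positivity) (Real.rpow_nonneg (ha n).le _)
  refine hfn.trans (le_of_eq ?_)
  have e8 : (a n) ^ ((9/8)*α) * (a n) ^ (-((7/6)*α)) = (a n) ^ (-(α/24)) := by
    rw [← Real.rpow_add (ha n)]; congr 1; ring
  have e9 : (a n) ^ ((9/8)*α) * (a n) ^ (-((21/16)*α)) = (a n) ^ (-((3/16)*α)) := by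
    rw [← Real.rpow_add (ha n)]; congr 1; ring
  rw [hC1, hC2, ← e8, ← e9]
  ring
end
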